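/- Let v̄_γ be a tuple of p ≥ 1 pairwise distinct complex numbers and let w, ξ be two further complex numbers, all generic so that every denominator below is nonzero. Then the sum over all partitions of v̄_γ into a single element v̄_ρ and the complementary subset v̄_σ satisfies: Σ f(v̄_ρ, v̄_σ)·g(w, v̄_ρ)·g(ξ, v̄_ρ) = g(ξ, w)·( f(w, v̄_γ) − f(ξ, v̄_γ) ). -/

import Mathlib

open scoped BigOperators

/-- The rational function `g(x,y) = c/(x-y)`. -/
noncomputable def gG (c x y : ℂ) : ℂ := c / (x - y)

/-- The rational function `f(x,y) = (x-y+c)/(x-y)`. -/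
noncomputable def fF (c x y : ℂ) : ℂ := (x - y + c) / (x - y)

/-- The rational function `h(x,y) = (x-y+c)/c`. -/
noncomputable def hH (c x y : ℂ) : ℂ := (x - y + c) / c

/-- A two-argument function applied to tuples denotes the product over all elements. -/
noncomputable def pF (F : ℂ → ℂ → ℂ) (U V : List ℂ) : ℂ :=
  (U.map fun x => (V.map fun y => F x y).prod).prod

/-- The domain-wall partition function `K(ū|v̄) = Δ'(ū)·Δ(v̄)·h(ū,v̄)·det(g(u_j,v_k)/h(u_j,v_k))`,
written in the equivalent (rational-continuation) form in which the prefactor `h(ū,v̄)` is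
distributed over the rows of the determinant:
`K(ū|v̄) = Δ'(ū)·Δ(v̄)·det( g(u_j,v_k)·∏_{k'≠k} h(u_j,v_{k'}) )`.
For tuples of equal length `n` with all denominators nonzero this coincides with the literal
formula, and `K(∅|∅) = 1`. -/
noncomputable def Kd (c : ℂ) (U V : List ℂ) : ℂ :=
  (∏ j : Fin U.length, ∏ k : Fin U.length,
      if (j : ℕ) < (k : ℕ) then gG c (U.get j) (U.get k) else 1) *
  (∏ j : Fin V.length, ∏ k : Fin V.length,
      if (k : ℕ) < (j : ℕ) then gG c (V.get j) (V.get k) else 1) *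
  Matrix.det (Matrix.of fun j k : Fin U.length =>
    gG c (U.get j) (V.getD (k : ℕ) 0) *
      ∏ k' : Fin U.length, if k' = k then 1 else hH c (U.get j) (V.getD (k' : ℕ) 0))

/-- The sub-tuple of a tuple `L` selected by a set `A` of positions (in increasing order). -/
noncomputable def subL (L : List ℂ) (A : Finset (Fin L.length)) : List ℂ :=
  (A.sort (· ≤ ·)).map L.get

/-- Genericity of a family of parameters: all members are pairwise distinct and no difference
of two members equals `±c`, so that every denominator occurring (also after shifts by `±c`)
is nonzero. -/
def Generic (c : ℂ) (L : List ℂ) : Prop :=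
  L.Pairwise fun x y => x ≠ y ∧ x - y ≠ c ∧ x - y ≠ -c

lemma keyterm (c u a z T : ℂ) (h1 : u - a ≠ 0) (h2 : z - u ≠ 0) (h3 : z - a ≠ 0) :
    fF c u a * T * gG c z u
      = T * gG c z u + gG c z a * (-(T * gG c a u) + T * gG c z u) := by
  have h4 : a - u ≠ 0 := fun h => h1 (by linear_combination -h)
  unfold fF gG
  field_simp
  ring

lemma keyterm2 (c u w ξ T : ℂ) (h1 : w - u ≠ 0) (h2 : ξ - u ≠ 0) (h3 : ξ - w ≠ 0) :
    T * gG c w u * gG c ξ u = gG c ξ w * (T * gG c w u - T * gG c ξ u) := by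
  unfold gG; field_simp; ring

lemma lemA (c : ℂ) {ι : Type*} [DecidableEq ι] (v : ι → ℂ) (s : Finset ι) :
    ∀ (z : ℂ), (∀ i ∈ s, z ≠ v i) → (∀ i ∈ s, ∀ j ∈ s, i ≠ j → v i ≠ v j) →
    ∑ k ∈ s, (∏ j ∈ s.erase k, fF c (v k) (v j)) * gG c z (v k)
      = (∏ j ∈ s, fF c z (v j)) - 1 := by
  induction s using Finset.induction_on with
  | empty => simp
  | @insert a s ha ih =>
    intro z hz hd
    have haz : z ≠ v a := hz a (Finset.mem_insert_self _ _)
    have hva : ∀ k ∈ s, v k ≠ v a := fun k hk =>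
      hd k (Finset.mem_insert_of_mem hk) a (Finset.mem_insert_self _ _)
        (fun h => ha (h ▸ hk))
    have hzk : ∀ k ∈ s, z ≠ v k := fun k hk => hz k (Finset.mem_insert_of_mem hk)
    rw [Finset.sum_insert ha, Finset.prod_insert ha, Finset.erase_insert ha]
    have hstep : ∀ k ∈ s,
        (∏ j ∈ (insert a s).erase k, fF c (v k) (v j)) * gG c z (v k)
          = (∏ j ∈ s.erase k, fF c (v k) (v j)) * gG c z (v k)
            + gG c z (v a) * (-((∏ j ∈ s.erase k, fF c (v k) (v j)) * gG c (v a) (v k))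
              + (∏ j ∈ s.erase k, fF c (v k) (v j)) * gG c z (v k)) := by
      intro k hk
      have hka : a ≠ k := fun h => ha (h ▸ hk)
      rw [Finset.erase_insert_of_ne hka,
        Finset.prod_insert (fun h => ha (Finset.mem_of_mem_erase h))]
      exact keyterm c (v k) (v a) z (∏ j ∈ s.erase k, fF c (v k) (v j))
        (sub_ne_zero.mpr (hva k hk)) (sub_ne_zero.mpr (hzk k hk)) (sub_ne_zero.mpr haz)
    have hdist := fun i hi j hj =>
      hd i (Finset.mem_insert_of_mem hi) j (Finset.mem_insert_of_mem hj)
    have ih1 := ih z hzk hdist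
    have ih2 := ih (v a) (fun k hk => (hva k hk).symm) hdist
    rw [Finset.sum_congr rfl hstep, Finset.sum_add_distrib, ← Finset.mul_sum,
      Finset.sum_add_distrib, Finset.sum_neg_distrib, ih1, ih2]
    have hfz : fF c z (v a) = 1 + gG c z (v a) := by
      have h3 : z - v a ≠ 0 := sub_ne_zero.mpr haz
      unfold fF gG; field_simp
    rw [hfz]
    ring

/-- eq. (6.32), contour-integral summation:
`Σ f(v̄_ρ,v̄_σ)·g(w,v̄_ρ)·g(ξ,v̄_ρ) = g(ξ,w)·(f(w,v̄_γ) − f(ξ,v̄_γ))`,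
the sum running over all partitions of `v̄_γ` into a single element `v̄_ρ` and the
complementary subset `v̄_σ`. -/
theorem stmt8 (c : ℂ) (hc : c ≠ 0) (p : ℕ) (hp : 1 ≤ p) (Vγ : List ℂ) (hVγ : Vγ.length = p)
    (w ξ : ℂ) (hgen : (Vγ ++ [w, ξ]).Pairwise (· ≠ ·)) :
    ∑ k : Fin Vγ.length,
      pF (fF c) [Vγ.get k] (subL Vγ (Finset.univ.erase k)) * gG c w (Vγ.get k) *
        gG c ξ (Vγ.get k)
      = gG c ξ w * (pF (fF c) [w] Vγ - pF (fF c) [ξ] Vγ) := by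
  have hv : ∀ i : Fin Vγ.length, Vγ.get i = Vγ.get i := fun _ => rfl
  set n := Vγ.length with hn
  rw [List.pairwise_append] at hgen
  obtain ⟨hVp, hwx, hcross⟩ := hgen
  have hwξ : w ≠ ξ := (List.pairwise_cons.mp hwx).1 ξ (by simp)
  have hwv : ∀ i : Fin n, w ≠ Vγ.get i := fun i h =>
    hcross (Vγ.get i) (Vγ.get_mem _) w (by simp) h.symm
  have hξv : ∀ i : Fin n, ξ ≠ Vγ.get i := fun i h =>
    hcross (Vγ.get i) (Vγ.get_mem _) ξ (by simp) h.symm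
  have hvv : ∀ i : Fin n, ∀ j : Fin n, i ≠ j → Vγ.get i ≠ Vγ.get j := by
    have hpg := List.pairwise_iff_get.mp hVp
    intro i j hij
    rcases lt_or_gt_of_ne hij with h | h
    · exact hpg i j h
    · exact fun he => hpg j i h he.symm
  -- rewrite pF ∘ subL as a Finset product
  have hsub : ∀ (x : ℂ) (A : Finset (Fin n)),
      pF (fF c) [x] (subL Vγ A) = ∏ j ∈ A, fF c x (Vγ.get j) := by
    intro x A
    simp only [pF, subL, List.map_map, List.map_cons, List.map_nil, List.prod_cons,
      List.prod_nil, mul_one]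
    rw [List.Perm.prod_eq ((Finset.sort_perm_toList A (· ≤ ·)).map _)]
    exact Finset.prod_map_toList A _
  -- rewrite pF over the full list
  have hfull : ∀ (x : ℂ), pF (fF c) [x] Vγ = ∏ j : Fin n, fF c x (Vγ.get j) := by
    intro x
    simp only [pF, List.map_cons, List.map_nil, List.prod_cons, List.prod_nil, mul_one]
    conv_lhs => rw [← List.map_get_finRange Vγ]
    rw [List.map_map, Fin.prod_univ_def]
    rfl
  simp only [hsub, hfull]
  have hterm : ∀ k : Fin n, k ∈ (Finset.univ : Finset (Fin n)) →
      (∏ j ∈ Finset.univ.erase k, fF c (Vγ.get k) (Vγ.get j)) * gG c w (Vγ.get k) *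
        gG c ξ (Vγ.get k)
      = gG c ξ w * ((∏ j ∈ Finset.univ.erase k, fF c (Vγ.get k) (Vγ.get j)) * gG c w (Vγ.get k)
          - (∏ j ∈ Finset.univ.erase k, fF c (Vγ.get k) (Vγ.get j)) * gG c ξ (Vγ.get k)) := by
    intro k _
    exact keyterm2 c (Vγ.get k) w ξ _ (sub_ne_zero.mpr (hwv k)) (sub_ne_zero.mpr (hξv k))
      (sub_ne_zero.mpr (Ne.symm hwξ))
  rw [Finset.sum_congr rfl hterm, ← Finset.mul_sum, Finset.sum_sub_distrib]
  rw [lemA c Vγ.get Finset.univ w (fun i _ => hwv i) (fun i _ j _ => hvv i j),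
    lemA c Vγ.get Finset.univ ξ (fun i _ => hξv i) (fun i _ j _ => hvv i j)]
  ring
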